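/- Let [a_0; a_1, …, a_n] be a (σ,k)-permutiple with n ≥ 1. Then it is continuant-preserving if and only if γ_0·γ_1⋯γ_{n−1} = k·γ'_0·γ'_1⋯γ'_{n−1}, where γ_j and γ'_j are the tails of [a_0; …, a_n] and of the permuted continued fraction [a_{σ(0)}; …, a_{σ(n)}], respectively. -/

import Mathlib

/-- Value of the finite simple continued fraction `[x₀; x₁, …, xₙ]`. -/
def cfv : List ℚ → ℚ
  | [] => 0
  | [x] => x
  | x :: y :: t => x + 1 / cfv (y :: t)

/-- The continuant `K(x₀, …, xₙ)`: `K() = 1`, `K(x₀) = x₀`, and the usual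
three-term recurrence. -/
def cont : List ℕ → ℕ
  | [] => 1
  | [x] => x
  | x :: y :: t => x * cont (y :: t) + cont t

/-- The digit string of `a`, as a list of rationals. -/
def digitsQ {N : ℕ} (a : Fin N → ℕ) : List ℚ := (List.ofFn a).map (fun x => (x : ℚ))

/-- `[a₀; a₁, …, aₙ]` (canonical: positive digits, last digit ≥ 2) is a
`(σ,k)`-permutiple: it equals `k` times the continued fraction of the permuted digits. -/
def IsPermutiple {n : ℕ} (a : Fin (n+1) → ℕ) (σ : Equiv.Perm (Fin (n+1))) (k : ℕ) : Prop :=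
  (∀ j, 0 < a j) ∧ 2 ≤ a (Fin.last n) ∧ 1 < k ∧
    cfv (digitsQ a) = k * cfv (digitsQ (a ∘ σ))

/-- A `(σ,k)`-permutiple is continuant-preserving if
`K(a₀,…,aₙ) = K(a_{σ(0)},…,a_{σ(n)})`. -/
def ContinuantPreserving {n : ℕ} (a : Fin (n+1) → ℕ) (σ : Equiv.Perm (Fin (n+1))) : Prop :=
  cont (List.ofFn a) = cont (List.ofFn (a ∘ σ))

/-- A `(σ,k)`-permutiple is perfect if `a_j = k·a_{σ(j)}` for even `j` and
`a_{σ(j)} = k·a_j` for odd `j`. -/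
def IsPerfect {n : ℕ} (a : Fin (n+1) → ℕ) (σ : Equiv.Perm (Fin (n+1))) (k : ℕ) : Prop :=
  ∀ j : Fin (n+1), (Even (j : ℕ) → a j = k * a (σ j)) ∧ (Odd (j : ℕ) → a (σ j) = k * a j)

/-- A `(σ,k)`-permutiple is symmetric if `a_j·a_{n−j} = a_{σ(j)}·a_{σ(n−j)}` for all `j`. -/
def IsSymmetric {n : ℕ} (a : Fin (n+1) → ℕ) (σ : Equiv.Perm (Fin (n+1))) : Prop :=
  ∀ j : Fin (n+1), a j * a j.rev = a (σ j) * a (σ j.rev)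

/-- A Landess permutiple: a continuant-preserving `(σ,k)`-permutiple with
`q_{n−1} = q'_{n−1}` and `p_{n−1} = k·p'_{n−1}`. -/
def IsLandess {n : ℕ} (a : Fin (n+1) → ℕ) (σ : Equiv.Perm (Fin (n+1))) (k : ℕ) : Prop :=
  IsPermutiple a σ k ∧ ContinuantPreserving a σ ∧
    cont ((List.ofFn a).tail.dropLast) = cont ((List.ofFn (a ∘ σ)).tail.dropLast) ∧
    cont ((List.ofFn a).dropLast) = k * cont ((List.ofFn (a ∘ σ)).dropLast)

/-- A `(σ,k)`-permutiple (with `n ≥ 1`) is continuant-preserving iff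
`γ₀·γ₁⋯γ_{n−1} = k·γ'₀·γ'₁⋯γ'_{n−1}`, where the tails are
`γ_j = 1/[a_{j+1};…,a_n]` and `γ'_j = 1/[a_{σ(j+1)};…,a_{σ(n)}]`. -/
lemma digitsQ_eq {N : ℕ} (a : Fin N → ℕ) :
    digitsQ a = (List.ofFn a).map (fun x : ℕ => (x:ℚ)) := by
  have : ∀ l : List ℕ, (l.flatMap fun a => [(a:ℚ)]) = l.map (fun x : ℕ => (x:ℚ)) := by
    intro l; induction l with
    | nil => simp
    | cons hd tl ih => simp [ih]; induction tl <;> simp_all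
  unfold digitsQ; generalize List.ofFn a = l; induction l <;> simp_all

lemma cont_pos : ∀ {l : List ℕ}, (∀ x ∈ l, 0 < x) → 0 < cont l
  | [], _ => by simp [cont]
  | [x], h => by simpa [cont] using h x (by simp)
  | x :: y :: t, h => by
    have h1 : 0 < cont (y :: t) := cont_pos (fun z hz => h z (List.mem_cons_of_mem _ hz))
    have h0 : 0 < x := h x (by simp)
    have : 0 < x * cont (y :: t) := Nat.mul_pos h0 h1
    show 0 < x * cont (y :: t) + cont t
    omega

lemma cfv_eq : ∀ (l : List ℕ), l ≠ [] → (∀ x ∈ l, 0 < x) →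
    cfv (l.map (fun x : ℕ => (x:ℚ))) = (cont l : ℚ) / (cont l.tail : ℚ)
  | [], hne, _ => absurd rfl hne
  | [x], _, _ => by simp [cfv, cont]
  | x :: y :: t, _, h => by
    have hyt : ∀ z ∈ y :: t, 0 < z := fun z hz => h z (List.mem_cons_of_mem _ hz)
    have ih := cfv_eq (y :: t) (by simp) hyt
    have hq : (0:ℚ) < cont (y :: t) := by exact_mod_cast cont_pos hyt
    have ht : (0:ℚ) < cont t := by
      exact_mod_cast cont_pos (fun z hz => h z (List.mem_cons_of_mem _ (List.mem_cons_of_mem _ hz)))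
    have hcont : (cont (x :: y :: t) : ℚ) = x * cont (y :: t) + cont t := by
      rw [show cont (x :: y :: t) = x * cont (y :: t) + cont t from rfl]; push_cast; ring
    show (x:ℚ) + 1 / cfv ((y :: t).map (fun x : ℕ => (x:ℚ))) = _
    rw [ih, hcont]
    show (x:ℚ) + 1 / ((cont (y :: t) : ℚ) / (cont t : ℚ)) = _ / (cont (y :: t) : ℚ)
    field_simp

lemma telescope (l : List ℕ) (hpos : ∀ x ∈ l, 0 < x) (m : ℕ) :
    ∏ j ∈ Finset.range m, ((cont (l.drop (j+2)) : ℚ) / (cont (l.drop (j+1)) : ℚ)) =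
      (cont (l.drop (m+1)) : ℚ) / (cont (l.drop 1) : ℚ) := by
  have hpd : ∀ i, (0:ℚ) < cont (l.drop i) := fun i => by
    exact_mod_cast cont_pos (fun z hz => hpos z (List.mem_of_mem_drop hz))
  induction m with
  | zero =>
    simp only [Finset.prod_range_zero]
    exact (div_self (ne_of_gt (hpd 1))).symm
  | succ m ih =>
    rw [Finset.prod_range_succ, ih, div_mul_div_comm,
      mul_comm ((cont (l.drop (m+1)) : ℚ)), mul_div_mul_right _ _ (ne_of_gt (hpd (m+1)))]

lemma prod_tails (l : List ℕ) (n : ℕ) (hlen : l.length = n + 1)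
    (hpos : ∀ x ∈ l, 0 < x) :
    ∏ j ∈ Finset.range n, 1 / cfv ((l.map (fun x : ℕ => (x:ℚ))).drop (j+1)) =
      1 / (cont l.tail : ℚ) := by
  have key : ∀ j ∈ Finset.range n,
      1 / cfv ((l.map (fun x : ℕ => (x:ℚ))).drop (j+1)) =
        (cont (l.drop (j+2)) : ℚ) / (cont (l.drop (j+1)) : ℚ) := by
    intro j hj
    rw [Finset.mem_range] at hj
    have hne : l.drop (j+1) ≠ [] := by
      intro hc
      have := List.drop_eq_nil_iff.mp hc
      omega
    have hposd : ∀ x ∈ l.drop (j+1), 0 < x := fun z hz => hpos z (List.mem_of_mem_drop hz)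
    have : (l.map (fun x : ℕ => (x:ℚ))).drop (j+1) = (l.drop (j+1)).map (fun x : ℕ => (x:ℚ)) := by
      exact List.map_drop.symm
    rw [this, cfv_eq _ hne hposd, one_div_div]
    congr 1
    rw [List.tail_drop]
  rw [Finset.prod_congr rfl key, telescope l hpos n]
  have : l.drop (n+1) = [] := by
    rw [List.drop_eq_nil_iff]; omega
  rw [this, List.drop_one]
  simp [cont]

theorem stmt1' {n : ℕ} (hn : 1 ≤ n) (a : Fin (n+1) → ℕ) (σ : Equiv.Perm (Fin (n+1))) (k : ℕ)
    (h : (∀ j, 0 < a j) ∧ 2 ≤ a (Fin.last n) ∧ 1 < k ∧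
      cfv ((List.ofFn a).map (fun x : ℕ => (x:ℚ))) =
        k * cfv ((List.ofFn (a ∘ σ)).map (fun x : ℕ => (x:ℚ)))) :
    cont (List.ofFn a) = cont (List.ofFn (a ∘ σ)) ↔
      (∏ j ∈ Finset.range n, 1 / cfv (((List.ofFn a).map (fun x : ℕ => (x:ℚ))).drop (j+1))) =
        k * ∏ j ∈ Finset.range n,
          1 / cfv (((List.ofFn (a ∘ σ)).map (fun x : ℕ => (x:ℚ))).drop (j+1)) := by
  obtain ⟨hpos, -, hk, hval⟩ := h
  set l := List.ofFn a with hl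
  set l' := List.ofFn (a ∘ σ) with hl'
  have hlen : l.length = n+1 := by simp [hl]
  have hlen' : l'.length = n+1 := by simp [hl']
  have hne : l ≠ [] := by intro hc; have := congrArg List.length hc; simp [hlen] at this
  have hne' : l' ≠ [] := by intro hc; have := congrArg List.length hc; simp [hlen'] at this
  have hposl : ∀ x ∈ l, 0 < x := by
    intro x hx; rw [hl, List.mem_ofFn] at hx; obtain ⟨i, rfl⟩ := hx; exact hpos i
  have hposl' : ∀ x ∈ l', 0 < x := by
    intro x hx; rw [hl', List.mem_ofFn] at hx; obtain ⟨i, rfl⟩ := hx; exact hpos _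
  have hP : (0:ℚ) < cont l := by exact_mod_cast cont_pos hposl
  have hP' : (0:ℚ) < cont l' := by exact_mod_cast cont_pos hposl'
  have hQ : (0:ℚ) < cont l.tail := by
    exact_mod_cast cont_pos (fun z hz => hposl z (List.mem_of_mem_tail hz))
  have hQ' : (0:ℚ) < cont l'.tail := by
    exact_mod_cast cont_pos (fun z hz => hposl' z (List.mem_of_mem_tail hz))
  have hkQ : (0:ℚ) < k := by exact_mod_cast Nat.lt_of_lt_of_le Nat.zero_lt_one hk.le
  rw [cfv_eq l hne hposl, cfv_eq l' hne' hposl', ← mul_div_assoc,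
    div_eq_div_iff (ne_of_gt hQ) (ne_of_gt hQ')] at hval
  -- hval : cont l * cont l'.tail = k * cont l' * cont l.tail
  rw [prod_tails l n hlen hposl, prod_tails l' n hlen' hposl', mul_one_div,
    div_eq_div_iff (ne_of_gt hQ) (ne_of_gt hQ'), one_mul]
  constructor
  · intro hcp
    have hcpq : (cont l : ℚ) = cont l' := by exact_mod_cast hcp
    have : (cont l : ℚ) * cont l'.tail = cont l * ((k : ℚ) * cont l.tail) := by
      rw [hval, hcpq]; ring
    exact mul_left_cancel₀ (ne_of_gt hP) this
  · intro hq
    have : ((k:ℚ) * cont l.tail) * cont l = ((k:ℚ) * cont l.tail) * cont l' := by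
      rw [← hq]; linear_combination hval - (cont l' : ℚ) * hq
    have := mul_left_cancel₀ (by positivity : ((k:ℚ) * cont l.tail) ≠ 0) this
    exact_mod_cast this


theorem stmt1 {n : ℕ} (hn : 1 ≤ n) (a : Fin (n+1) → ℕ) (σ : Equiv.Perm (Fin (n+1))) (k : ℕ)
    (h : IsPermutiple a σ k) :
    ContinuantPreserving a σ ↔
      (∏ j ∈ Finset.range n, 1 / cfv ((digitsQ a).drop (j+1))) =
        k * ∏ j ∈ Finset.range n, 1 / cfv ((digitsQ (a ∘ σ)).drop (j+1)) := by
  have h' := h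
  unfold IsPermutiple at h'
  rw [digitsQ_eq, digitsQ_eq] at h'
  unfold ContinuantPreserving
  simp only [digitsQ_eq]
  exact stmt1' hn a σ k h'
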